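/- Let X and Y be finite sets, let f(·|θ) be a family of strictly positive probability mass functions on X with θ ↦ f(x|θ) differentiable for every x, and let T : X → Y be a statistic. Let f_T(y|θ) = Σ_{x : T(x)=y} f(x|θ) be the induced probability mass function of T. Then the Fisher information cannot increase under the statistic: Σ_{y∈Y} (d/dθ log f_T(y|θ))² · f_T(y|θ) ≤ Σ_{x∈X} (d/dθ log f(x|θ))² · f(x|θ), where the sum over y is restricted to those y with f_T(y|θ) > 0. -/

import Mathlib

open scoped Classical

/-- Fisher information cannot increase under a statistic `T : X → Y`:
the Fisher information of the induced (pushforward) model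
`f_T(y|θ) = ∑_{x : T x = y} f(x|θ)` (summing only over `y` with `f_T(y|θ) > 0`) is at most
the Fisher information of the full-data model. -/
theorem fisher_information_data_processing
    {X Y : Type*} [Fintype X] [Fintype Y]
    (a b : ℝ) (f : X → ℝ → ℝ) (T : X → Y)
    (hpos : ∀ x : X, ∀ θ ∈ Set.Ioo a b, 0 < f x θ)
    (hdiff : ∀ x : X, ∀ θ ∈ Set.Ioo a b, DifferentiableAt ℝ (f x) θ) :
    ∀ θ ∈ Set.Ioo a b,
      ∑ y ∈ Finset.univ.filter
          (fun y : Y => 0 < ∑ x ∈ Finset.univ.filter (fun x : X => T x = y), f x θ),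
        (deriv (fun t => Real.log
            (∑ x ∈ Finset.univ.filter (fun x : X => T x = y), f x t)) θ) ^ 2
          * ∑ x ∈ Finset.univ.filter (fun x : X => T x = y), f x θ
      ≤ ∑ x : X, (deriv (fun t => Real.log (f x t)) θ) ^ 2 * f x θ := by
  intro θ hθ
  set S : Y → Finset X := fun y => Finset.univ.filter (fun x : X => T x = y) with hS
  -- RHS rewrite
  have hlogd : ∀ x : X, deriv (fun t => Real.log (f x t)) θ = deriv (f x) θ / f x θ := by
    intro x
    exact (((hdiff x θ hθ).hasDerivAt).log (hpos x θ hθ).ne').deriv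
  have hRHS : ∀ x : X, (deriv (fun t => Real.log (f x t)) θ) ^ 2 * f x θ
      = (deriv (f x) θ) ^ 2 / f x θ := by
    intro x
    have hne := (hpos x θ hθ).ne'
    rw [hlogd x]
    field_simp
  have hsumderiv : ∀ y : Y, HasDerivAt (fun t => ∑ x ∈ S y, f x t)
      (∑ x ∈ S y, deriv (f x) θ) θ :=
    fun y => HasDerivAt.fun_sum (fun x _ => (hdiff x θ hθ).hasDerivAt)
  calc
    ∑ y ∈ Finset.univ.filter (fun y : Y => 0 < ∑ x ∈ S y, f x θ),
        (deriv (fun t => Real.log (∑ x ∈ S y, f x t)) θ) ^ 2 * ∑ x ∈ S y, f x θ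
      ≤ ∑ y ∈ Finset.univ.filter (fun y : Y => 0 < ∑ x ∈ S y, f x θ),
        ∑ x ∈ S y, (deriv (f x) θ) ^ 2 / f x θ := by
        apply Finset.sum_le_sum
        intro y hy
        have hyp : 0 < ∑ x ∈ S y, f x θ := (Finset.mem_filter.mp hy).2
        have hld : deriv (fun t => Real.log (∑ x ∈ S y, f x t)) θ
            = (∑ x ∈ S y, deriv (f x) θ) / (∑ x ∈ S y, f x θ) :=
          ((hsumderiv y).log hyp.ne').deriv
        have heq : (deriv (fun t => Real.log (∑ x ∈ S y, f x t)) θ) ^ 2 * ∑ x ∈ S y, f x θ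
            = (∑ x ∈ S y, deriv (f x) θ) ^ 2 / (∑ x ∈ S y, f x θ) := by
          have hne := hyp.ne'
          rw [hld]
          field_simp
        rw [heq]
        exact Finset.sq_sum_div_le_sum_sq_div _ _ (fun x _ => hpos x θ hθ)
    _ ≤ ∑ y : Y, ∑ x ∈ S y, (deriv (f x) θ) ^ 2 / f x θ := by
        apply Finset.sum_le_sum_of_subset_of_nonneg (Finset.filter_subset _ _)
        intro y _ _
        exact Finset.sum_nonneg (fun x _ => div_nonneg (sq_nonneg _) (hpos x θ hθ).le)
    _ = ∑ x : X, (deriv (f x) θ) ^ 2 / f x θ :=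
        Finset.sum_fiberwise _ T _
    _ = ∑ x : X, (deriv (fun t => Real.log (f x t)) θ) ^ 2 * f x θ := by
        exact Finset.sum_congr rfl (fun x _ => (hRHS x).symm)
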